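/- The two-stage robust problem min_{y∈Y} max_{k=1,...,N} max_{c∈C} min_{f∈F(y,d^k)} cᵀf, where C = {ĉ + w : w ≥ 0, eᵀw ≤ B} and F(y,d) = {f ≥ 0 : Af ≤ α I y − d}, has the same optimal value as the single-stage problem: minimize t over y ∈ Y, t ∈ ℝ, f^k ∈ ℝ^m, λ^k ∈ ℝ (k = 1,...,N) subject to t ≥ ĉᵀf^k + λ^k B, Af^k ≤ α I y − d^k, 0 ≤ f^k ≤ λ^k e, λ^k ≥ 0 for each k. -/

import Mathlib

lemma clm_pi_repr {ι : Type*} [Fintype ι] [DecidableEq ι] (q : ((ι → ℝ) →L[ℝ] ℝ)) (u : ι → ℝ) :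
    q u = ∑ v, u v * q (Pi.single v 1) := by
  have hu : u = ∑ v, u v • (Pi.single v (1:ℝ) : ι → ℝ) := by
    ext x
    simp [Finset.sum_apply, Pi.single_apply]
  conv_lhs => rw [hu]
  rw [map_sum]
  simp [smul_eq_mul]

lemma key_duality {m : ℕ} (c : Fin m → ℝ) (hc : ∀ j, 0 ≤ c j) (B : ℝ) (hB : 0 ≤ B)
    (F : Set (Fin m → ℝ)) (hconv : Convex ℝ F) (hne : F.Nonempty)
    (hpos : ∀ f ∈ F, ∀ j, 0 ≤ f j) (ε : ℝ) (hε : 0 < ε) :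
    ∃ f ∈ F, ∃ lam : ℝ, 0 ≤ lam ∧ (∀ j, f j ≤ lam) ∧
      (∑ j, c j * f j) + lam * B ≤
        sSup {u : ℝ | ∃ w : Fin m → ℝ, (∀ j, 0 ≤ w j) ∧ (∑ j, w j) ≤ B ∧
          u = sInf {z : ℝ | ∃ f' ∈ F, z = ∑ j, (c j + w j) * f' j}} + ε := by
  obtain ⟨f0, hf0⟩ := hne
  set Z : (Fin m → ℝ) → Set ℝ :=
    fun w => {z : ℝ | ∃ f' ∈ F, z = ∑ j, (c j + w j) * f' j} with hZ
  set US : Set ℝ := {u : ℝ | ∃ w : Fin m → ℝ, (∀ j, 0 ≤ w j) ∧ (∑ j, w j) ≤ B ∧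
      u = sInf (Z w)} with hUS
  set vstar := sSup US with hvstar
  -- basic facts about Z
  have hZne : ∀ w, (Z w).Nonempty := fun w => ⟨_, f0, hf0, rfl⟩
  have hZbd : ∀ w : Fin m → ℝ, (∀ j, 0 ≤ w j) → BddBelow (Z w) := by
    rintro w hw
    refine ⟨0, ?_⟩
    rintro z ⟨f', hf', rfl⟩
    exact Finset.sum_nonneg fun j _ =>
      mul_nonneg (add_nonneg (hc j) (hw j)) (hpos f' hf' j)
  -- US is nonempty and bounded above
  have hUSne : US.Nonempty := by
    refine ⟨sInf (Z 0), 0, fun j => le_refl 0, by simp [hB], rfl⟩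
  have hS0 : (0:ℝ) ≤ ∑ j, f0 j := Finset.sum_nonneg fun j _ => hpos f0 hf0 j
  have hf0le : ∀ j, f0 j ≤ ∑ j', f0 j' := fun j =>
    Finset.single_le_sum (fun j' _ => hpos f0 hf0 j') (Finset.mem_univ j)
  have hUSbdd : BddAbove US := by
    refine ⟨(∑ j, c j * f0 j) + B * (∑ j, f0 j), ?_⟩
    rintro u ⟨w, hw, hwB, rfl⟩
    refine le_trans (csInf_le (hZbd w hw) ⟨f0, hf0, rfl⟩) ?_
    have h1 : ∑ j, (c j + w j) * f0 j = (∑ j, c j * f0 j) + ∑ j, w j * f0 j := by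
      rw [← Finset.sum_add_distrib]; exact Finset.sum_congr rfl fun j _ => by ring
    have h2 : ∑ j, w j * f0 j ≤ ∑ j, w j * (∑ j', f0 j') :=
      Finset.sum_le_sum fun j _ => mul_le_mul_of_nonneg_left (hf0le j) (hw j)
    have h3 : ∑ j, w j * (∑ j', f0 j') = (∑ j, w j) * (∑ j', f0 j') := by
      rw [← Finset.sum_mul]
    have h4 : (∑ j, w j) * (∑ j', f0 j') ≤ B * (∑ j', f0 j') :=
      mul_le_mul_of_nonneg_right hwB hS0
    linarith
  by_contra hcon
  push_neg at hcon
  -- the linear "payoff" map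
  set T : (Fin m → ℝ) → Option (Fin m) → ℝ :=
    fun f v => (∑ j, c j * f j) + Option.elim v 0 (fun j => B * f j) with hT
  have hTcomb : ∀ (a b : ℝ) (f1 f2 : Fin m → ℝ) (v : Option (Fin m)),
      T (a • f1 + b • f2) v = a * T f1 v + b * T f2 v := by
    intro a b f1 f2 v
    have hsum' : ∑ j, c j * (a * f1 j + b * f2 j)
        = a * (∑ j, c j * f1 j) + b * (∑ j, c j * f2 j) := by
      rw [Finset.mul_sum, Finset.mul_sum, ← Finset.sum_add_distrib]
      exact Finset.sum_congr rfl fun j _ => by ring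
    cases v with
    | none =>
      simp only [hT, Option.elim_none, add_zero, Pi.add_apply, Pi.smul_apply,
        smul_eq_mul]
      rw [hsum']
    | some j =>
      simp only [hT, Option.elim_some, Pi.add_apply, Pi.smul_apply, smul_eq_mul]
      rw [hsum']
      ring
  -- from the negated goal: every f ∈ F has some vertex payoff exceeding vstar + ε
  have hbig : ∀ f ∈ F, ∃ v, vstar + ε < T f v := by
    intro f hf
    by_contra hsmall
    push_neg at hsmall
    have hnone : (∑ j, c j * f j) ≤ vstar + ε := by simpa [hT] using hsmall none
    by_cases hB0 : B = 0
    · have := hcon f hf (∑ j, f j) (Finset.sum_nonneg fun j _ => hpos f hf j)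
        (fun j => Finset.single_le_sum (fun j' _ => hpos f hf j') (Finset.mem_univ j))
      rw [hB0] at this
      simp at this
      linarith
    · have hBpos : 0 < B := lt_of_le_of_ne hB (Ne.symm hB0)
      have hj : ∀ j, f j ≤ (vstar + ε - ∑ j', c j' * f j') / B := by
        intro j
        have := hsmall (some j)
        simp only [hT, Option.elim] at this
        rw [le_div_iff₀ hBpos]
        linarith
      have := hcon f hf ((vstar + ε - ∑ j', c j' * f j') / B)
        (div_nonneg (by linarith) hB) hj
      rw [div_mul_cancel₀ _ hB0] at this
      linarith
  -- separation setup
  set U : Set (Option (Fin m) → ℝ) := {u | ∃ f ∈ F, ∀ v, T f v ≤ u v} with hU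
  set O : Set (Option (Fin m) → ℝ) := {u | ∀ v, u v < vstar + ε} with hO
  have hOconv : Convex ℝ O := by
    have : O = ⋂ v, {u : Option (Fin m) → ℝ | u v < vstar + ε} := by
      ext u; simp [hO, Set.mem_iInter]
    rw [this]
    exact convex_iInter fun v =>
      convex_halfSpace_lt ⟨fun a b => rfl, fun r a => rfl⟩ _
  have hOopen : IsOpen O := by
    have : O = ⋂ v, {u : Option (Fin m) → ℝ | u v < vstar + ε} := by
      ext u; simp [hO, Set.mem_iInter]
    rw [this]
    exact isOpen_iInter_of_finite fun v =>
      isOpen_lt (continuous_apply v) continuous_const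
  have hUconv : Convex ℝ U := by
    rintro u1 ⟨f1, hf1, h1⟩ u2 ⟨f2, hf2, h2⟩ a b ha hb hab
    refine ⟨a • f1 + b • f2, hconv hf1 hf2 ha hb hab, fun v => ?_⟩
    rw [hTcomb]
    have := add_le_add (mul_le_mul_of_nonneg_left (h1 v) ha)
      (mul_le_mul_of_nonneg_left (h2 v) hb)
    simpa using this
  have hdisj : Disjoint O U := by
    rw [Set.disjoint_left]
    rintro u hOu ⟨f, hf, hfu⟩
    obtain ⟨v, hv⟩ := hbig f hf
    exact absurd (lt_of_lt_of_le hv (hfu v)) (not_lt.mpr (hOu v).le)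
  obtain ⟨q, r, hqO, hqU⟩ := geometric_hahn_banach_open hOconv hOopen hUconv hdisj
  set qv : Option (Fin m) → ℝ := fun v => q (Pi.single v 1) with hqv
  have hrepr : ∀ u, q u = ∑ v, u v * qv v := fun u => clm_pi_repr q u
  have hu0 : T f0 ∈ U := ⟨f0, hf0, fun v => le_refl _⟩
  have hru0 : r ≤ q (T f0) := hqU _ hu0
  -- qv is nonnegative
  have hqvnn : ∀ v0, 0 ≤ qv v0 := by
    intro v0
    by_contra hneg
    push_neg at hneg
    set t := (q (T f0) - r + 1) / (-qv v0) with ht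
    have htpos : 0 < t := div_pos (by linarith) (by linarith)
    have hmem : T f0 + t • (Pi.single v0 1 : Option (Fin m) → ℝ) ∈ U := by
      refine ⟨f0, hf0, fun v => ?_⟩
      have : 0 ≤ t • (Pi.single v0 (1:ℝ) : Option (Fin m) → ℝ) v := by
        simp only [Pi.smul_apply, smul_eq_mul, Pi.single_apply]
        positivity
      simp only [Pi.add_apply, Pi.smul_apply] at this ⊢
      linarith
    have hq' : q (T f0 + t • (Pi.single v0 1 : Option (Fin m) → ℝ))
        = q (T f0) + t * qv v0 := by
      rw [map_add, map_smul]; simp [hqv, smul_eq_mul]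
    have hcanc : t * (-qv v0) = q (T f0) - r + 1 :=
      div_mul_cancel₀ _ (by linarith)
    have := hqU _ hmem
    rw [hq'] at this
    linarith
  -- the total weight is positive
  set s := ∑ v, qv v with hs
  have hsnn : 0 ≤ s := Finset.sum_nonneg fun v _ => hqvnn v
  have hspos : 0 < s := by
    rcases lt_or_eq_of_le hsnn with h | h
    · exact h
    · exfalso
      have hall : ∀ v ∈ Finset.univ, qv v = 0 :=
        (Finset.sum_eq_zero_iff_of_nonneg fun v _ => hqvnn v).mp h.symm
      have hq0 : ∀ u, q u = 0 := by
        intro u; rw [hrepr]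
        exact Finset.sum_eq_zero fun v hv => by rw [hall v hv, mul_zero]
      have hoO : (fun _ => vstar + ε - 1) ∈ O := fun v => by
        show vstar + ε - 1 < vstar + ε; linarith
      have h1 : (0:ℝ) < r := by have := hqO _ hoO; rwa [hq0] at this
      have h2 : r ≤ 0 := by have := hru0; rwa [hq0] at this
      linarith
  -- r / s is at least vstar + ε
  have hrge : (vstar + ε) * s ≤ r := by
    by_contra hlt
    push_neg at hlt
    have hrs : r / s < vstar + ε := (div_lt_iff₀ hspos).mpr (by linarith)
    set a := (r / s + (vstar + ε)) / 2 with ha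
    have ha1 : r / s < a := by linarith
    have ha2 : a < vstar + ε := by linarith
    have hoO : (fun _ => a) ∈ O := fun v => ha2
    have hqa : q (fun _ => a) = a * s := by
      rw [hrepr, ← Finset.mul_sum]
    have hlt1 := hqO _ hoO
    rw [hqa] at hlt1
    have hlt2 : r < a * s := (div_lt_iff₀ hspos).mp ha1
    linarith
  -- build the dual certificate wbar ∈ W
  set wbar : Fin m → ℝ := fun j => B * qv (some j) / s with hwbar
  have hwnn : ∀ j, 0 ≤ wbar j := fun j =>
    div_nonneg (mul_nonneg hB (hqvnn _)) hsnn
  have hsome_le : ∑ j, qv (some j) ≤ s := by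
    have := Fintype.sum_option qv
    rw [hs]; rw [this]
    linarith [hqvnn none]
  have hwsum : ∑ j, wbar j ≤ B := by
    have h1 : ∑ j, wbar j = B * (∑ j, qv (some j)) / s := by
      rw [← Finset.sum_div, ← Finset.mul_sum]
    rw [h1, div_le_iff₀ hspos]
    calc B * (∑ j, qv (some j)) ≤ B * s := mul_le_mul_of_nonneg_left hsome_le hB
      _ = B * s := rfl
  -- every z ∈ Z wbar satisfies r / s ≤ z
  have hlow : ∀ z ∈ Z wbar, r / s ≤ z := by
    rintro z ⟨f', hf', rfl⟩
    have hTU : T f' ∈ U := ⟨f', hf', fun v => le_refl _⟩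
    have h1 : r ≤ ∑ v, T f' v * qv v := by
      have := hqU _ hTU; rwa [hrepr] at this
    have hs0 : s ≠ 0 := ne_of_gt hspos
    have expand : ∀ j : Fin m, s * ((c j + wbar j) * f' j)
        = s * (c j * f' j) + B * qv (some j) * f' j := by
      intro j
      simp only [hwbar]
      field_simp
    have h2 : s * (∑ j, (c j + wbar j) * f' j) = ∑ v, T f' v * qv v := by
      calc s * ∑ j, (c j + wbar j) * f' j
          = ∑ j, (s * (c j * f' j) + B * qv (some j) * f' j) := by
            rw [Finset.mul_sum]; exact Finset.sum_congr rfl fun j _ => expand j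
        _ = s * (∑ j, c j * f' j) + ∑ j, B * qv (some j) * f' j := by
            rw [Finset.sum_add_distrib, ← Finset.mul_sum]
        _ = ∑ v, T f' v * qv v := by
            rw [Fintype.sum_option]
            have e1 : ∀ j ∈ Finset.univ, T f' (some j) * qv (some j)
                = (∑ j', c j' * f' j') * qv (some j)
                  + B * qv (some j) * f' j := fun j _ => by
              simp only [hT, Option.elim_some]; ring
            rw [Finset.sum_congr rfl e1, Finset.sum_add_distrib, ← Finset.mul_sum]
            have e2 : T f' none = ∑ j, c j * f' j := by
              simp only [hT, Option.elim_none, add_zero]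
            have e3 : s = qv none + ∑ j, qv (some j) := by
              rw [hs, Fintype.sum_option]
            rw [e2, e3]
            ring
    have h3 : r ≤ s * ∑ j, (c j + wbar j) * f' j := by rw [h2]; exact h1
    rw [div_le_iff₀ hspos]
    linarith
  -- conclude the contradiction
  have hin : sInf (Z wbar) ∈ US := ⟨wbar, hwnn, hwsum, rfl⟩
  have h5 : sInf (Z wbar) ≤ vstar := le_csSup hUSbdd hin
  have h6 : r / s ≤ sInf (Z wbar) := le_csInf (hZne wbar) hlow
  have h7 : vstar + ε ≤ r / s := (le_div_iff₀ hspos).mpr hrge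
  linarith


/-- The first-stage feasible set `Y = {y ∈ {0,1}^n : eᵀy = P}`. -/
def firstStage (n : ℕ) (P : ℕ) : Set (Fin n → ℝ) :=
  {y | (∀ i, y i = 0 ∨ y i = 1) ∧ (∑ i, y i) = (P : ℝ)}

/-- The second-stage feasible flows `F(y, d) = {f ≥ 0 : Af ≤ αIy − d}`. -/
def flowSet {n m : ℕ} (A : Matrix (Fin n) (Fin m) ℝ) (α : Fin n → ℝ)
    (y : Fin n → ℝ) (d : Fin n → ℝ) : Set (Fin m → ℝ) :=
  {f | (∀ j, 0 ≤ f j) ∧ ∀ i, (∑ j, A i j * f j) ≤ α i * y i - d i}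

lemma flowSet_convex {n m : ℕ} (A : Matrix (Fin n) (Fin m) ℝ) (α : Fin n → ℝ)
    (y : Fin n → ℝ) (d : Fin n → ℝ) : Convex ℝ (flowSet A α y d) := by
  rintro f1 ⟨h1n, h1c⟩ f2 ⟨h2n, h2c⟩ a b ha hb hab
  constructor
  · intro j
    simp only [Pi.add_apply, Pi.smul_apply, smul_eq_mul]
    exact add_nonneg (mul_nonneg ha (h1n j)) (mul_nonneg hb (h2n j))
  · intro i
    have hsum : ∑ j, A i j * (a • f1 + b • f2) j
        = a * (∑ j, A i j * f1 j) + b * (∑ j, A i j * f2 j) := by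
      rw [Finset.mul_sum, Finset.mul_sum, ← Finset.sum_add_distrib]
      refine Finset.sum_congr rfl fun j _ => ?_
      simp only [Pi.add_apply, Pi.smul_apply, smul_eq_mul]
      ring
    rw [hsum]
    have e1 : a * (∑ j, A i j * f1 j) ≤ a * (α i * y i - d i) :=
      mul_le_mul_of_nonneg_left (h1c i) ha
    have e2 : b * (∑ j, A i j * f2 j) ≤ b * (α i * y i - d i) :=
      mul_le_mul_of_nonneg_left (h2c i) hb
    have e3 : a * (α i * y i - d i) + b * (α i * y i - d i) = α i * y i - d i := by
      rw [← add_mul, hab, one_mul]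
    linarith


/-- Theorem 2: the two-stage robust problem equals the single-stage
mixed-integer linear reformulation. -/
theorem two_stage_robust_reformulation (n m N P : ℕ) (hN : 0 < N)
    (A : Matrix (Fin n) (Fin m) ℝ) (chat : Fin m → ℝ) (hchat : ∀ j, 0 ≤ chat j)
    (B : ℝ) (hB : 0 ≤ B) (α : Fin n → ℝ) (d : Fin N → Fin n → ℝ)
    (hα : ∀ k i, (∑ i', d k i') ≤ α i)
    (hfeas : ∀ y ∈ firstStage n P, ∀ k, (flowSet A α y (d k)).Nonempty) :
    sInf {v : ℝ | ∃ y ∈ firstStage n P, v =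
        ⨆ k : Fin N, sSup {u : ℝ | ∃ w : Fin m → ℝ, (∀ j, 0 ≤ w j) ∧
          (∑ j, w j) ≤ B ∧
          u = sInf {z : ℝ | ∃ f ∈ flowSet A α y (d k),
            z = ∑ j, (chat j + w j) * f j}}}
      = sInf {t : ℝ | ∃ y ∈ firstStage n P,
          ∃ (f : Fin N → Fin m → ℝ) (lam : Fin N → ℝ),
          ∀ k, (∀ j, 0 ≤ f k j ∧ f k j ≤ lam k) ∧ 0 ≤ lam k ∧
            (∀ i, (∑ j, A i j * f k j) ≤ α i * y i - d k i) ∧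
            (∑ j, chat j * f k j) + lam k * B ≤ t} := by
  classical
  haveI : Nonempty (Fin N) := Fin.pos_iff_nonempty.mp hN
  set L : Set ℝ := {v : ℝ | ∃ y ∈ firstStage n P, v =
        ⨆ k : Fin N, sSup {u : ℝ | ∃ w : Fin m → ℝ, (∀ j, 0 ≤ w j) ∧
          (∑ j, w j) ≤ B ∧
          u = sInf {z : ℝ | ∃ f ∈ flowSet A α y (d k),
            z = ∑ j, (chat j + w j) * f j}}} with hL
  set R : Set ℝ := {t : ℝ | ∃ y ∈ firstStage n P,
          ∃ (f : Fin N → Fin m → ℝ) (lam : Fin N → ℝ),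
          ∀ k, (∀ j, 0 ≤ f k j ∧ f k j ≤ lam k) ∧ 0 ≤ lam k ∧
            (∀ i, (∑ j, A i j * f k j) ≤ α i * y i - d k i) ∧
            (∑ j, chat j * f k j) + lam k * B ≤ t} with hR
  rcases (firstStage n P).eq_empty_or_nonempty with hY | hY
  · have h1 : L = ∅ := by
      refine Set.eq_empty_iff_forall_notMem.mpr ?_
      rintro v ⟨y, hy, -⟩
      rw [hY] at hy
      exact hy
    have h2 : R = ∅ := by
      refine Set.eq_empty_iff_forall_notMem.mpr ?_
      rintro t ⟨y, hy, -⟩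
      rw [hY] at hy
      exact hy
    rw [h1, h2]
  obtain ⟨y0, hy0⟩ := hY
  -- nonnegativity and bounds
  have hLnn : ∀ v ∈ L, (0:ℝ) ≤ v := by
    rintro v ⟨y, hy, rfl⟩
    apply Real.iSup_nonneg
    intro k
    apply Real.sSup_nonneg
    rintro u ⟨w, hw, hwB, rfl⟩
    apply Real.sInf_nonneg
    rintro z ⟨f, hf, rfl⟩
    exact Finset.sum_nonneg fun j _ =>
      mul_nonneg (add_nonneg (hchat j) (hw j)) (hf.1 j)
  have hRnn : ∀ t ∈ R, (0:ℝ) ≤ t := by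
    rintro t ⟨y, hy, f, lam, hcons⟩
    obtain ⟨hfj, hlam0, hflow, hobj⟩ := hcons ⟨0, hN⟩
    have h1 : (0:ℝ) ≤ ∑ j, chat j * f ⟨0, hN⟩ j :=
      Finset.sum_nonneg fun j _ => mul_nonneg (hchat j) (hfj j).1
    have h2 : (0:ℝ) ≤ lam ⟨0, hN⟩ * B := mul_nonneg hlam0 hB
    linarith
  have hLbdd : BddBelow L := ⟨0, fun v hv => hLnn v hv⟩
  have hRbdd : BddBelow R := ⟨0, fun t ht => hRnn t ht⟩
  have hLne : L.Nonempty := ⟨_, y0, hy0, rfl⟩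
  have hRne : R.Nonempty := by
    choose f0 hf0 using hfeas y0 hy0
    refine ⟨Finset.univ.sup' Finset.univ_nonempty
        (fun k => (∑ j, chat j * f0 k j) + (∑ j, f0 k j) * B),
      y0, hy0, f0, fun k => ∑ j, f0 k j, fun k => ?_⟩
    refine ⟨fun j => ⟨(hf0 k).1 j,
      Finset.single_le_sum (fun j' _ => (hf0 k).1 j') (Finset.mem_univ j)⟩,
      Finset.sum_nonneg fun j _ => (hf0 k).1 j, (hf0 k).2, by
        exact Finset.le_sup'
          (fun k => (∑ j, chat j * f0 k j) + (∑ j, f0 k j) * B)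
          (Finset.mem_univ k)⟩
  apply le_antisymm
  · -- sInf L ≤ sInf R
    refine le_csInf hRne ?_
    rintro t ⟨y, hy, f, lam, hcons⟩
    refine le_trans (csInf_le hLbdd (show _ ∈ L from ⟨y, hy, rfl⟩)) ?_
    apply ciSup_le
    intro k
    obtain ⟨hfj, hlam0, hflow, hobj⟩ := hcons k
    apply csSup_le
    · exact ⟨_, (fun _ => (0:ℝ)), fun j => le_refl 0, by simp [hB], rfl⟩
    · rintro u ⟨w, hw, hwB, rfl⟩
      have hfk : f k ∈ flowSet A α y (d k) := ⟨fun j => (hfj j).1, hflow⟩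
      have hbd : BddBelow {z : ℝ | ∃ f' ∈ flowSet A α y (d k),
          z = ∑ j, (chat j + w j) * f' j} := by
        refine ⟨0, ?_⟩
        rintro z ⟨f', hf', rfl⟩
        exact Finset.sum_nonneg fun j _ =>
          mul_nonneg (add_nonneg (hchat j) (hw j)) (hf'.1 j)
      refine le_trans (csInf_le hbd ⟨f k, hfk, rfl⟩) ?_
      have hsplit : ∑ j, (chat j + w j) * f k j
          = (∑ j, chat j * f k j) + ∑ j, w j * f k j := by
        rw [← Finset.sum_add_distrib]
        exact Finset.sum_congr rfl fun j _ => by ring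
      have h2 : ∑ j, w j * f k j ≤ (∑ j, w j) * lam k := by
        calc ∑ j, w j * f k j ≤ ∑ j, w j * lam k :=
              Finset.sum_le_sum fun j _ =>
                mul_le_mul_of_nonneg_left (hfj j).2 (hw j)
          _ = (∑ j, w j) * lam k := by rw [Finset.sum_mul]
      have h3 : (∑ j, w j) * lam k ≤ B * lam k :=
        mul_le_mul_of_nonneg_right hwB hlam0
      have h4 : lam k * B = B * lam k := mul_comm _ _
      linarith
  · -- sInf R ≤ sInf L
    refine le_csInf hLne ?_
    rintro v ⟨y, hy, rfl⟩
    apply le_of_forall_pos_le_add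
    intro ε hε
    have hkey := fun k : Fin N => key_duality chat hchat B hB
      (flowSet A α y (d k)) (flowSet_convex A α y (d k)) (hfeas y hy k)
      (fun f hf j => hf.1 j) ε hε
    choose f hfF lam hlam0 hlamle hobj using hkey
    refine csInf_le hRbdd (show _ ∈ R from ⟨y, hy, f, lam, fun k =>
      ⟨fun j => ⟨(hfF k).1 j, hlamle k j⟩, hlam0 k, (hfF k).2, ?_⟩⟩)
    refine le_trans (hobj k) (add_le_add_left ?_ ε)
    exact le_ciSup (f := fun k : Fin N =>
      sSup {u : ℝ | ∃ w : Fin m → ℝ, (∀ j, 0 ≤ w j) ∧ (∑ j, w j) ≤ B ∧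
        u = sInf {z : ℝ | ∃ f ∈ flowSet A α y (d k),
          z = ∑ j, (chat j + w j) * f j}})
      (Finite.bddAbove_range _) k
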